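/- For $0 \le z < 1/4$, $\frac{2}{\pi}\int_0^\pi \mathrm{Li}_2(4z\sin^2\theta)\,d\theta = 4\,\mathrm{Li}_2\Big(\frac{1-\sqrt{1-4z}}{2}\Big) - 2\log^2\Big(\frac{1+\sqrt{1-4z}}{2}\Big)$. -/

import Mathlib

open Real

/-- The dilogarithm `Li₂(w) = ∑_{n≥1} wⁿ/n²`. -/
noncomputable def li2 (w : ℝ) : ℝ := ∑' n : ℕ, w^(n+1) / ((n:ℝ)+1)^2

open Set Finset


namespace DilogAux

noncomputable def cb (n : ℕ) : ℝ := (Nat.centralBinom n : ℝ)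

lemma cb_pos (n : ℕ) : 0 < cb n := by
  unfold cb; exact_mod_cast Nat.centralBinom_pos n

lemma cb_zero : cb 0 = 1 := by simp [cb, Nat.centralBinom_zero]

lemma cb_nat_le (n : ℕ) : Nat.centralBinom n ≤ 4 ^ n := by
  induction n with
  | zero => simp [Nat.centralBinom_zero]
  | succ k ih =>
    have h := Nat.succ_mul_centralBinom_succ k
    have h2 : (k+1) * Nat.centralBinom (k+1) ≤ (k+1) * (4 * Nat.centralBinom k) := by
      rw [h]; nlinarith [Nat.centralBinom_pos k]
    have h3 : Nat.centralBinom (k+1) ≤ 4 * Nat.centralBinom k :=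
      Nat.le_of_mul_le_mul_left h2 (Nat.succ_pos k)
    calc Nat.centralBinom (k+1) ≤ 4 * Nat.centralBinom k := h3
      _ ≤ 4 * 4 ^ k := by omega
      _ = 4 ^ (k+1) := by ring

lemma cb_le (n : ℕ) : cb n ≤ 4 ^ n := by
  unfold cb
  have := cb_nat_le n
  exact_mod_cast this

lemma cb_rec (n : ℕ) : ((n:ℝ)+1) * cb (n+1) = 2*(2*(n:ℝ)+1) * cb n := by
  have := Nat.succ_mul_centralBinom_succ n
  have : ((n+1) * Nat.centralBinom (n+1) : ℝ) = (2 * (2*n+1) * Nat.centralBinom n : ℕ) := by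
    exact_mod_cast congrArg (Nat.cast : ℕ → ℝ) this
  push_cast at this
  unfold cb
  push_cast
  linarith

/-- If two functions are continuous on `[a,b]`, share derivatives on `(a,b)`, and agree
at `a`, they agree at `b`. -/
lemma eq_endpoint {f g : ℝ → ℝ} {a b : ℝ} (hab : a ≤ b)
    (hf : ContinuousOn f (Icc a b)) (hg : ContinuousOn g (Icc a b))
    (hd : ∀ x ∈ Ioo a b, ∃ d, HasDerivAt f d x ∧ HasDerivAt g d x)
    (ha : f a = g a) : f b = g b := by
  set h : ℝ → ℝ := fun x => f x - g x with hh
  have hcont : ContinuousOn h (Icc a b) := hf.sub hg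
  have hderiv : ∀ x ∈ Ioo a b, HasDerivAt h 0 x := by
    intro x hx
    obtain ⟨d, hfd, hgd⟩ := hd x hx
    have := hfd.sub hgd
    rwa [sub_self] at this
  have hdiff : DifferentiableOn ℝ h (interior (Icc a b)) := by
    rw [interior_Icc]
    exact fun x hx => (hderiv x hx).differentiableAt.differentiableWithinAt
  have hderiv0 : ∀ x ∈ interior (Icc a b), deriv h x = 0 := by
    rw [interior_Icc]
    exact fun x hx => (hderiv x hx).deriv
  have hmono : MonotoneOn h (Icc a b) :=
    monotoneOn_of_deriv_nonneg (convex_Icc a b) hcont hdiff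
      (fun x hx => le_of_eq (hderiv0 x hx).symm)
  have hanti : AntitoneOn h (Icc a b) :=
    antitoneOn_of_deriv_nonpos (convex_Icc a b) hcont hdiff
      (fun x hx => le_of_eq (hderiv0 x hx))
  have hmem_a : a ∈ Icc a b := ⟨le_refl a, hab⟩
  have hmem_b : b ∈ Icc a b := ⟨hab, le_refl b⟩
  have h1 : h a ≤ h b := hmono hmem_a hmem_b hab
  have h2 : h b ≤ h a := hanti hmem_a hmem_b hab
  have : h b = h a := le_antisymm h2 h1
  have ha0 : h a = 0 := by simp [hh, ha]
  have : h b = 0 := by rw [this, ha0]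
  simpa [hh, sub_eq_zero] using this


lemma summable_cb_pow {x : ℝ} (hx : |x| < 1/4) : Summable (fun n => cb n * x^n) := by
  apply Summable.of_norm
  apply Summable.of_nonneg_of_le (fun n => norm_nonneg _) (fun n => ?_)
    (summable_geometric_of_lt_one (by positivity) (by linarith [abs_nonneg x]) :
      Summable fun n => (4 * |x|)^n)
  have : ‖cb n * x^n‖ = cb n * |x|^n := by
    rw [norm_mul, norm_pow, Real.norm_eq_abs, Real.norm_eq_abs,
      abs_of_pos (cb_pos n)]
  rw [this, mul_pow]
  gcongr
  exact cb_le n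

lemma summable_cb_deriv {r : ℝ} (hr0 : 0 < r) (hr : r < 1/4) :
    Summable (fun n : ℕ => 4^n * ((n:ℝ) * r^(n-1))) := by
  have h4r : ‖(4*r : ℝ)‖ < 1 := by
    rw [Real.norm_eq_abs, abs_of_pos (by positivity)]; linarith
  have := (summable_pow_mul_geometric_of_norm_lt_one 1 h4r).mul_left (1/r)
  apply this.congr
  intro n
  cases n with
  | zero => simp
  | succ k =>
    simp only [pow_succ, pow_one, Nat.add_sub_cancel]
    push_cast
    field_simp
    ring

lemma cb_hasDerivAt {x : ℝ} (hx : |x| < 1/4) :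
    HasDerivAt (fun y => ∑' n, cb n * y^n) (∑' n, cb n * ((n:ℝ) * x^(n-1))) x := by
  set r : ℝ := (|x| + 1/4)/2 with hr
  have hxr : |x| < r := by rw [hr]; linarith [abs_nonneg x]
  have hr0 : 0 < r := lt_of_le_of_lt (abs_nonneg x) hxr
  have hr4 : r < 1/4 := by rw [hr]; linarith
  apply hasDerivAt_tsum_of_isPreconnected
    (summable_cb_deriv hr0 hr4) (isOpen_Ioo (a := -r) (b := r))
    (convex_Ioo _ _).isPreconnected
    (g' := fun n y => cb n * ((n:ℝ) * y^(n-1)))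
    (y₀ := 0)
  · intro n y _
    exact (hasDerivAt_pow n y).const_mul (cb n)
  · intro n y hy
    have hyr : |y| ≤ r := le_of_lt (abs_lt.mpr ⟨hy.1, hy.2⟩)
    rw [Real.norm_eq_abs, abs_mul, abs_of_pos (cb_pos n), abs_mul, abs_pow,
      Nat.abs_cast]
    apply mul_le_mul (cb_le n) ?_ (by positivity) (by positivity)
    exact mul_le_mul_of_nonneg_left (pow_le_pow_left₀ (abs_nonneg y) hyr _) (Nat.cast_nonneg n)
  · exact ⟨by linarith, hr0⟩
  · simpa using summable_cb_pow (x := 0) (by norm_num)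
  · exact abs_lt.mp hxr


lemma summable_cb_deriv_at {x : ℝ} (hx : |x| < 1/4) :
    Summable (fun n : ℕ => cb n * ((n:ℝ) * x^(n-1))) := by
  set r : ℝ := (|x| + 1/4)/2 with hr
  have hxr : |x| ≤ r := by rw [hr]; linarith [abs_nonneg x]
  have hr0 : 0 < r := by rw [hr]; positivity
  have hr4 : r < 1/4 := by rw [hr]; linarith
  apply Summable.of_norm
  apply Summable.of_nonneg_of_le (fun n => norm_nonneg _) (fun n => ?_)
    (summable_cb_deriv hr0 hr4)
  rw [Real.norm_eq_abs, abs_mul, abs_of_pos (cb_pos n), abs_mul, Nat.abs_cast, abs_pow]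
  apply mul_le_mul (cb_le n) ?_ (by positivity) (by positivity)
  exact mul_le_mul_of_nonneg_left (pow_le_pow_left₀ (abs_nonneg x) hxr _) (Nat.cast_nonneg n)

lemma summable_n_cb_pow {x : ℝ} (hx : |x| < 1/4) :
    Summable (fun n : ℕ => (n:ℝ) * cb n * x^n) := by
  have h4x : ‖(4*|x| : ℝ)‖ < 1 := by
    rw [Real.norm_eq_abs, abs_of_nonneg (by positivity)]; linarith
  apply Summable.of_norm
  apply Summable.of_nonneg_of_le (fun n => norm_nonneg _) (fun n => ?_)
    (summable_pow_mul_geometric_of_norm_lt_one 1 h4x)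
  rw [Real.norm_eq_abs, abs_mul, abs_mul, Nat.abs_cast, abs_of_pos (cb_pos n), abs_pow,
    pow_one, mul_pow, ← mul_assoc]
  apply mul_le_mul_of_nonneg_right ?_ (by positivity)
  exact mul_le_mul_of_nonneg_left (cb_le n) (Nat.cast_nonneg n)

lemma cb_ode {x : ℝ} (hx : |x| < 1/4) :
    (1-4*x) * (∑' n : ℕ, cb n * ((n:ℝ) * x^(n-1))) = 2 * ∑' n : ℕ, cb n * x^n := by
  have hS : Summable (fun n : ℕ => cb n * x^n) := summable_cb_pow hx
  have hD : Summable (fun n : ℕ => cb n * ((n:ℝ) * x^(n-1))) := summable_cb_deriv_at hx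
  have hN : Summable (fun n : ℕ => (n:ℝ) * cb n * x^n) := summable_n_cb_pow hx
  have hD' : Summable (fun n : ℕ => ((n:ℝ)+1) * cb (n+1) * x^n) := by
    have := (summable_nat_add_iff 1).mpr hD
    apply this.congr
    intro n
    simp only [Nat.add_sub_cancel]
    push_cast
    ring
  have hshift : ∑' n : ℕ, cb n * ((n:ℝ) * x^(n-1))
      = ∑' n : ℕ, ((n:ℝ)+1) * cb (n+1) * x^n := by
    rw [Summable.tsum_eq_zero_add hD]
    simp only [Nat.cast_zero, zero_mul, mul_zero, zero_add, Nat.add_sub_cancel]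
    apply tsum_congr
    intro n
    push_cast
    ring
  have hNshift : ∑' n : ℕ, (n:ℝ) * cb n * x^n
      = x * ∑' n : ℕ, ((n:ℝ)+1) * cb (n+1) * x^n := by
    rw [Summable.tsum_eq_zero_add hN, ← tsum_mul_left]
    simp only [Nat.cast_zero, zero_mul, zero_add]
    apply tsum_congr
    intro n
    push_cast
    ring
  have hkey : ∑' n : ℕ, ((n:ℝ)+1) * cb (n+1) * x^n
      = 4 * (∑' n : ℕ, (n:ℝ) * cb n * x^n) + 2 * ∑' n : ℕ, cb n * x^n := by
    rw [← tsum_mul_left (a := (4:ℝ)), ← tsum_mul_left (a := (2:ℝ)),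
      ← Summable.tsum_add (hN.mul_left 4) (hS.mul_left 2)]
    apply tsum_congr
    intro n
    linear_combination x^n * (cb_rec n)
  rw [hshift]
  have hfin : ∑' n : ℕ, ((n:ℝ)+1) * cb (n+1) * x^n
      = 4 * (x * ∑' n : ℕ, ((n:ℝ)+1) * cb (n+1) * x^n) + 2 * ∑' n : ℕ, cb n * x^n := by
    conv_lhs => rw [hkey, hNshift]
  linear_combination hfin


lemma tsum_cb_zero : ∑' n : ℕ, cb n * (0:ℝ)^n = 1 := by
  rw [tsum_eq_single 0 (fun n hn => by
    rw [zero_pow hn, mul_zero])]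
  simp [cb_zero]

lemma cb_tsum {x : ℝ} (hx0 : 0 ≤ x) (hx : x < 1/4) :
    ∑' n : ℕ, cb n * x^n = 1 / Real.sqrt (1-4*x) := by
  have h14 : (0:ℝ) < 1 - 4*x := by linarith
  have hsq : Real.sqrt (1-4*x) ≠ 0 := by
    positivity
  rw [eq_div_iff hsq]
  have key : ∀ y, 0 ≤ y → y ≤ x →
      (fun t => (∑' n : ℕ, cb n * t^n) * Real.sqrt (1-4*t)) y = (fun _ => (1:ℝ)) y := by
    intro b hb0 hbx
    apply eq_endpoint hb0 ?_ (continuousOn_const) ?_ (by simp [tsum_cb_zero])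
    · -- continuity
      apply ContinuousOn.mul
      · apply continuousOn_tsum (fun n => (continuousOn_const.mul (continuousOn_pow n)))
          (summable_geometric_of_lt_one (by positivity)
            (by linarith : 4*x < 1) : Summable fun n : ℕ => (4*x)^n)
        intro n y hy
        simp only [Pi.mul_apply]
        rw [Real.norm_eq_abs, abs_mul, abs_of_pos (cb_pos n), abs_pow, mul_pow]
        apply mul_le_mul (cb_le n) ?_ (by positivity) (by positivity)
        apply pow_le_pow_left₀ (abs_nonneg y)
        rw [abs_of_nonneg hy.1]
        exact le_trans hy.2 hbx
      · exact (Real.continuous_sqrt.comp (by continuity)).continuousOn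
    · -- derivative
      intro y hy
      refine ⟨0, ?_, hasDerivAt_const y 1⟩
      have hyx : |y| < 1/4 := by
        rw [abs_of_pos hy.1]
        exact lt_of_lt_of_le hy.2 (le_trans hbx (le_of_lt hx))
      have h14y : (0:ℝ) < 1 - 4*y := by
        have := abs_lt.mp hyx
        linarith [this.2]
      have hp := cb_hasDerivAt hyx
      have hinner : HasDerivAt (fun t : ℝ => 1 - 4*t) (-4) y := by
        simpa using ((hasDerivAt_id y).const_mul (4:ℝ)).const_sub 1
      have hs : HasDerivAt (fun t => Real.sqrt (1-4*t))
          (1 / (2 * Real.sqrt (1-4*y)) * (-4)) y :=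
        (Real.hasDerivAt_sqrt (ne_of_gt h14y)).comp y hinner
      have hmul := hp.mul hs
      refine hmul.congr_deriv ?_
      have hode := cb_ode hyx
      have hsqy : Real.sqrt (1-4*y) ≠ 0 := by positivity
      have hsq2 : Real.sqrt (1-4*y) * Real.sqrt (1-4*y) = 1-4*y :=
        Real.mul_self_sqrt (le_of_lt h14y)
      set D := ∑' n : ℕ, cb n * ((n:ℝ) * y^(n-1)) with hD
      set S := ∑' n : ℕ, cb n * y^n with hSdef
      field_simp
      linear_combination (2 * D) * hsq2 + 2 * hode
  have := key x hx0 (le_refl x)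
  simpa using this


lemma z_mono {v u : ℝ} (h0 : 0 ≤ v) (hvu : v ≤ u) (hu : u ≤ 1/2) : v*(1-v) ≤ u*(1-u) := by
  nlinarith

lemma z_lt_quarter {u : ℝ} (h0 : 0 ≤ u) (h : u < 1/2) : u*(1-u) < 1/4 := by nlinarith

lemma cb_tsum_u {u : ℝ} (h0 : 0 ≤ u) (h : u < 1/2) :
    ∑' n : ℕ, cb n * (u*(1-u))^n = 1/(1-2*u) := by
  have hz0 : 0 ≤ u*(1-u) := by nlinarith
  rw [cb_tsum hz0 (z_lt_quarter h0 h)]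
  rw [show 1-4*(u*(1-u)) = (1-2*u)^2 by ring, Real.sqrt_sq (by linarith)]

lemma cb_shift_tsum {u : ℝ} (h0 : 0 < u) (h : u < 1/2) :
    ∑' n : ℕ, cb (n+1) * (u*(1-u))^n = (1/(1-2*u) - 1)/(u*(1-u)) := by
  set z := u*(1-u) with hz
  have hz0 : 0 < z := by rw [hz]; nlinarith
  have hz4 : |z| < 1/4 := by
    rw [abs_of_pos hz0]; exact z_lt_quarter (le_of_lt h0) h
  have hS : Summable (fun n : ℕ => cb n * z^n) := summable_cb_pow hz4
  have h1 : ∑' n : ℕ, cb (n+1) * z^(n+1) = 1/(1-2*u) - 1 := by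
    have h2 := Summable.tsum_eq_zero_add hS
    rw [cb_tsum_u (le_of_lt h0) h] at h2
    rw [cb_zero] at h2
    simp only [pow_zero, mul_one] at h2
    linarith
  have h3 : ∑' n : ℕ, cb (n+1) * z^n = (∑' n : ℕ, cb (n+1) * z^(n+1))/z := by
    rw [← tsum_div_const]
    apply tsum_congr
    intro n
    rw [pow_succ]
    field_simp
  rw [h3, h1]

lemma summable_F1 {v : ℝ} (h0 : 0 ≤ v) (h : v < 1/2) :
    Summable (fun n : ℕ => cb (n+1) * (v*(1-v))^(n+1) / ((n:ℝ)+1)) := by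
  have hz0 : 0 ≤ v*(1-v) := by nlinarith
  have hz : 4*(v*(1-v)) < 1 := by nlinarith
  apply Summable.of_nonneg_of_le
    (fun n => div_nonneg (mul_nonneg (le_of_lt (cb_pos (n+1))) (by positivity))
      (by positivity)) (fun n => ?_)
    (((summable_geometric_of_lt_one (by positivity) hz).mul_left
      (4*(v*(1-v)))) : Summable fun n : ℕ => (4*(v*(1-v))) * (4*(v*(1-v)))^n)
  have hle : cb (n+1) * (v*(1-v))^(n+1) / ((n:ℝ)+1) ≤ cb (n+1) * (v*(1-v))^(n+1) := by
    apply div_le_self (mul_nonneg (le_of_lt (cb_pos (n+1))) (by positivity))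
      (by push_cast; linarith [Nat.cast_nonneg (α := ℝ) n])
  calc cb (n+1) * (v*(1-v))^(n+1) / ((n:ℝ)+1) ≤ cb (n+1) * (v*(1-v))^(n+1) := hle
    _ ≤ 4^(n+1) * (v*(1-v))^(n+1) := by
        apply mul_le_mul_of_nonneg_right (cb_le (n+1)) (by positivity)
    _ = (4*(v*(1-v))) * (4*(v*(1-v)))^n := by rw [← mul_pow]; ring

lemma summable_F2 {v : ℝ} (h0 : 0 ≤ v) (h : v < 1/2) :
    Summable (fun n : ℕ => cb (n+1) * (v*(1-v))^(n+1) / ((n:ℝ)+1)^2) := by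
  have hz0 : 0 ≤ v*(1-v) := by nlinarith
  apply Summable.of_nonneg_of_le
    (fun n => div_nonneg (mul_nonneg (le_of_lt (cb_pos (n+1))) (by positivity))
      (by positivity)) (fun n => ?_) (summable_F1 h0 h)
  apply div_le_div_of_nonneg_left
    (mul_nonneg (le_of_lt (cb_pos (n+1))) (by positivity)) (by positivity)
  have : (1:ℝ) ≤ (n:ℝ)+1 := by linarith [Nat.cast_nonneg (α := ℝ) n]
  nlinarith


lemma li2_zero : li2 0 = 0 := by
  unfold li2
  simp

lemma li2_continuousOn {b : ℝ} (hb : b < 1) (hb0 : 0 ≤ b) :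
    ContinuousOn li2 (Icc (0:ℝ) b) := by
  unfold li2
  apply continuousOn_tsum (fun n => ((continuousOn_pow (n+1)).div_const _))
    ((summable_geometric_of_lt_one hb0 hb).mul_left b)
  intro n y hy
  rw [Real.norm_eq_abs, abs_div, abs_pow, abs_of_nonneg (by positivity : (0:ℝ) ≤ ((n:ℝ)+1)^2)]
  have h1 : |y| ≤ b := by rw [abs_of_nonneg hy.1]; exact hy.2
  have h2 : (1:ℝ) ≤ ((n:ℝ)+1)^2 := by nlinarith [Nat.cast_nonneg (α := ℝ) n]
  calc |y|^(n+1) / ((n:ℝ)+1)^2 ≤ |y|^(n+1) / 1 := by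
        apply div_le_div_of_nonneg_left (by positivity) one_pos h2 |>.trans_eq rfl
    _ = |y|^(n+1) := div_one _
    _ ≤ b^(n+1) := pow_le_pow_left₀ (abs_nonneg y) h1 _
    _ = b * b^n := by rw [pow_succ]; ring

lemma li2_hasDerivAt {v : ℝ} (h0 : 0 < v) (h : v < 1) :
    HasDerivAt li2 (-Real.log (1-v)/v) v := by
  set r : ℝ := (v+1)/2 with hr
  have hvr : v < r := by rw [hr]; linarith
  have hr0 : 0 < r := by rw [hr]; linarith
  have hr1 : r < 1 := by rw [hr]; linarith
  have hderiv : HasDerivAt li2 (∑' n : ℕ, v^n/((n:ℝ)+1)) v := by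
    unfold li2
    apply hasDerivAt_tsum_of_isPreconnected
      ((summable_geometric_of_lt_one (le_of_lt hr0) hr1 : Summable fun n : ℕ => r^n))
      (isOpen_Ioo (a := -r) (b := r))
      (convex_Ioo _ _).isPreconnected
      (g' := fun (n : ℕ) (y : ℝ) => y^n/((n:ℝ)+1)) (y₀ := 0)
    · intro n y _
      have := (hasDerivAt_pow (n+1) y).div_const (((n:ℝ)+1)^2)
      refine this.congr_deriv ?_
      have hne : ((n:ℝ)+1) ≠ 0 := by positivity
      push_cast
      field_simp
    · intro n y hy
      have hyr : |y| ≤ r := le_of_lt (abs_lt.mpr ⟨hy.1, hy.2⟩)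
      rw [Real.norm_eq_abs, abs_div, abs_pow, abs_of_nonneg (by positivity : (0:ℝ) ≤ (n:ℝ)+1)]
      have h2 : (1:ℝ) ≤ (n:ℝ)+1 := by linarith [Nat.cast_nonneg (α := ℝ) n]
      calc |y|^n / ((n:ℝ)+1) ≤ |y|^n / 1 :=
            div_le_div_of_nonneg_left (by positivity) one_pos h2
        _ = |y|^n := div_one _
        _ ≤ r^n := pow_le_pow_left₀ (abs_nonneg y) hyr _
    · exact ⟨by linarith, hr0⟩
    · apply (summable_zero).congr
      intro n
      simp
    · exact ⟨by linarith, hvr⟩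
  refine hderiv.congr_deriv ?_
  have hv1 : |v| < 1 := by rw [abs_of_pos h0]; exact h
  have hlog := (hasSum_pow_div_log_of_abs_lt_one hv1).tsum_eq
  have : ∑' n : ℕ, v^n/((n:ℝ)+1) = (∑' n : ℕ, v^(n+1)/((n:ℝ)+1))/v := by
    rw [← tsum_div_const]
    apply tsum_congr
    intro n
    rw [pow_succ]
    field_simp
  rw [this, hlog]


lemma hasDerivAt_z (w : ℝ) : HasDerivAt (fun t : ℝ => t*(1-t)) (1-2*w) w := by
  have h := (hasDerivAt_id w).mul ((hasDerivAt_const w 1).sub (hasDerivAt_id w))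
  refine h.congr_deriv ?_
  simp only [id_eq, Pi.sub_apply]
  ring

lemma F1_term_hasDerivAt (n : ℕ) (w : ℝ) :
    HasDerivAt (fun t : ℝ => cb (n+1) * (t*(1-t))^(n+1) / ((n:ℝ)+1))
      (cb (n+1) * ((w*(1-w))^n * (1-2*w))) w := by
  have hpow := (hasDerivAt_z w).pow (n+1)
  have h := (hpow.const_mul (cb (n+1))).div_const ((n:ℝ)+1)
  refine h.congr_deriv ?_
  have hne : ((n:ℝ)+1) ≠ 0 := by positivity
  push_cast
  field_simp

lemma F1_continuousOn {b : ℝ} (hb0 : 0 ≤ b) (hb : b < 1/2) :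
    ContinuousOn (fun v => ∑' n : ℕ, cb (n+1) * (v*(1-v))^(n+1) / ((n:ℝ)+1)^2)
      (Icc (0:ℝ) b) ∧
    ContinuousOn (fun v => ∑' n : ℕ, cb (n+1) * (v*(1-v))^(n+1) / ((n:ℝ)+1))
      (Icc (0:ℝ) b) := by
  have hz0 : 0 ≤ b*(1-b) := by nlinarith
  have hz : 4*(b*(1-b)) < 1 := by nlinarith
  have hsum : Summable (fun n : ℕ => (4*(b*(1-b))) * (4*(b*(1-b)))^n) :=
    (summable_geometric_of_lt_one (by positivity) hz).mul_left _
  have hbound : ∀ (k : ℝ), 1 ≤ k → ∀ (n : ℕ) (y : ℝ), y ∈ Icc (0:ℝ) b →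
      ‖cb (n+1) * (y*(1-y))^(n+1) / k‖ ≤ (4*(b*(1-b))) * (4*(b*(1-b)))^n := by
    intro k hk n y hy
    have hy0 : 0 ≤ y := hy.1
    have hyb : y ≤ b := hy.2
    have hzy0 : 0 ≤ y*(1-y) := by nlinarith
    have hmono : y*(1-y) ≤ b*(1-b) := z_mono hy0 hyb (le_of_lt hb)
    rw [Real.norm_eq_abs, abs_div, abs_mul, abs_of_pos (cb_pos (n+1)), abs_pow,
      abs_of_nonneg (by linarith : (0:ℝ) ≤ k), abs_of_nonneg hzy0]
    calc cb (n+1) * (y*(1-y))^(n+1) / k ≤ cb (n+1) * (y*(1-y))^(n+1) / 1 := by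
          apply div_le_div_of_nonneg_left
            (mul_nonneg (le_of_lt (cb_pos (n+1))) (by positivity)) one_pos hk
      _ = cb (n+1) * (y*(1-y))^(n+1) := div_one _
      _ ≤ 4^(n+1) * (b*(1-b))^(n+1) := by
          apply mul_le_mul (cb_le (n+1)) (pow_le_pow_left₀ hzy0 hmono _)
            (by positivity) (by positivity)
      _ = (4*(b*(1-b))) * (4*(b*(1-b)))^n := by rw [← mul_pow]; ring
  constructor
  · apply continuousOn_tsum (fun n => by fun_prop) hsum
    intro n y hy
    exact hbound (((n:ℝ)+1)^2) (by nlinarith [Nat.cast_nonneg (α := ℝ) n]) n y hy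
  · apply continuousOn_tsum (fun n => by fun_prop) hsum
    intro n y hy
    exact hbound ((n:ℝ)+1) (by linarith [Nat.cast_nonneg (α := ℝ) n]) n y hy

lemma F1_eq {u : ℝ} (h0 : 0 ≤ u) (h : u < 1/2) :
    ∑' n : ℕ, cb (n+1) * (u*(1-u))^(n+1) / ((n:ℝ)+1) = -2 * Real.log (1-u) := by
  rcases eq_or_lt_of_le h0 with rfl | h0'
  · simp
  set b' : ℝ := (u + 1/2)/2 with hb'
  have hub' : u < b' := by rw [hb']; linarith
  have hb'0 : 0 < b' := by rw [hb']; linarith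
  have hb'h : b' < 1/2 := by rw [hb']; linarith
  apply eq_endpoint h0 ((F1_continuousOn h0 h).2)
  · -- continuity of -2 log(1-v)
    apply ContinuousOn.mul continuousOn_const
    apply Real.continuousOn_log.comp (by fun_prop)
    intro y hy
    have : (0:ℝ) < 1 - y := by
      rcases hy with ⟨hy1, hy2⟩
      linarith
    simp only [Set.mem_compl_iff, Set.mem_singleton_iff]
    exact ne_of_gt this
  · -- derivatives
    intro v hv
    have hv0 : 0 < v := hv.1
    have hvu : v < u := hv.2
    have hv12 : v < 1/2 := lt_trans hvu h
    have h1v : (0:ℝ) < 1 - v := by linarith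
    have h12v : (0:ℝ) < 1 - 2*v := by linarith
    refine ⟨2/(1-v), ?_, ?_⟩
    · -- tsum derivative
      have hD : HasDerivAt (fun t => ∑' n : ℕ, cb (n+1) * (t*(1-t))^(n+1) / ((n:ℝ)+1))
          (∑' n : ℕ, cb (n+1) * ((v*(1-v))^n * (1-2*v))) v := by
        have hzb' : 0 ≤ b'*(1-b') := by nlinarith
        have hzb4 : 4*(b'*(1-b')) < 1 := by nlinarith
        apply hasDerivAt_tsum_of_isPreconnected
          (((summable_geometric_of_lt_one (by positivity) hzb4).mul_left
            (4:ℝ)) : Summable fun n : ℕ => 4 * (4*(b'*(1-b')))^n)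
          (isOpen_Ioo (a := 0) (b := b')) (convex_Ioo _ _).isPreconnected
          (g' := fun (n : ℕ) (w : ℝ) => cb (n+1) * ((w*(1-w))^n * (1-2*w)))
          (y₀ := u)
        · intro n y _
          exact F1_term_hasDerivAt n y
        · intro n y hy
          have hy0 : 0 < y := hy.1
          have hyb : y < b' := hy.2
          have hzy0 : 0 ≤ y*(1-y) := by nlinarith
          have hmono : y*(1-y) ≤ b'*(1-b') := z_mono (le_of_lt hy0) (le_of_lt hyb)
            (le_of_lt hb'h)
          have h2y : |1-2*y| ≤ 1 := by
            rw [abs_le]; constructor <;> nlinarith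
          rw [Real.norm_eq_abs, abs_mul, abs_of_pos (cb_pos (n+1)), abs_mul, abs_pow,
            abs_of_nonneg hzy0]
          calc cb (n+1) * ((y*(1-y))^n * |1-2*y|)
              ≤ 4^(n+1) * ((b'*(1-b'))^n * 1) := by
                apply mul_le_mul (cb_le (n+1)) ?_ (by positivity) (by positivity)
                exact mul_le_mul (pow_le_pow_left₀ hzy0 hmono _) h2y (abs_nonneg _)
                  (by positivity)
            _ = 4 * (4*(b'*(1-b')))^n := by
                rw [mul_pow (4:ℝ) (b'*(1-b')) n, pow_succ]; ring
        · exact ⟨h0', hub'⟩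
        · exact summable_F1 (le_of_lt h0') h
        · exact ⟨hv0, lt_trans hvu hub'⟩
      refine hD.congr_deriv ?_
      have hsplit : ∑' n : ℕ, cb (n+1) * ((v*(1-v))^n * (1-2*v))
          = (1-2*v) * ∑' n : ℕ, cb (n+1) * (v*(1-v))^n := by
        rw [← tsum_mul_left]
        apply tsum_congr
        intro n
        ring
      rw [hsplit, cb_shift_tsum hv0 hv12]
      have hvne : v ≠ 0 := ne_of_gt hv0
      have h1vne : (1:ℝ) - v ≠ 0 := ne_of_gt h1v
      have h12vne : (1:ℝ) - 2*v ≠ 0 := ne_of_gt h12v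
      field_simp
      ring
    · -- log derivative
      have hinner : HasDerivAt (fun t : ℝ => 1 - t) (-1) v := by
        have := (hasDerivAt_const v (1:ℝ)).sub (hasDerivAt_id' v)
        rwa [zero_sub] at this
      have hlog := (Real.hasDerivAt_log (ne_of_gt h1v)).comp v hinner
      have h2 := hlog.const_mul (-2 : ℝ)
      refine h2.congr_deriv ?_
      field_simp
  · norm_num


lemma F2_term_hasDerivAt (n : ℕ) (w : ℝ) :
    HasDerivAt (fun t : ℝ => cb (n+1) * (t*(1-t))^(n+1) / ((n:ℝ)+1)^2)
      (cb (n+1) * ((w*(1-w))^n * (1-2*w)) / ((n:ℝ)+1)) w := by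
  have hpow := (hasDerivAt_z w).pow (n+1)
  have h := (hpow.const_mul (cb (n+1))).div_const (((n:ℝ)+1)^2)
  refine h.congr_deriv ?_
  have hne : ((n:ℝ)+1) ≠ 0 := by positivity
  push_cast
  field_simp

set_option maxHeartbeats 1000000 in
lemma F2_eq {u : ℝ} (h0 : 0 ≤ u) (h : u < 1/2) :
    ∑' n : ℕ, cb (n+1) * (u*(1-u))^(n+1) / ((n:ℝ)+1)^2
      = 2 * li2 u - (Real.log (1-u))^2 := by
  rcases eq_or_lt_of_le h0 with rfl | h0'
  · simp [li2_zero]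
  set b' : ℝ := (u + 1/2)/2 with hb'
  have hub' : u < b' := by rw [hb']; linarith
  have hb'0 : 0 < b' := by rw [hb']; linarith
  have hb'h : b' < 1/2 := by rw [hb']; linarith
  apply eq_endpoint h0 ((F1_continuousOn h0 h).1)
  · -- continuity of RHS
    apply ContinuousOn.sub
    · exact (li2_continuousOn (by linarith) h0).const_smul (2:ℝ) |>.congr
        (fun y _ => by simp [smul_eq_mul])
    · apply ContinuousOn.pow
      apply Real.continuousOn_log.comp (by fun_prop)
      intro y hy
      have : (0:ℝ) < 1 - y := by
        rcases hy with ⟨hy1, hy2⟩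
        linarith
      simp only [Set.mem_compl_iff, Set.mem_singleton_iff]
      exact ne_of_gt this
  · -- derivatives
    intro v hv
    have hv0 : 0 < v := hv.1
    have hvu : v < u := hv.2
    have hv12 : v < 1/2 := lt_trans hvu h
    have h1v : (0:ℝ) < 1 - v := by linarith
    have h12v : (0:ℝ) < 1 - 2*v := by linarith
    have hvne : v ≠ 0 := ne_of_gt hv0
    have h1vne : (1:ℝ) - v ≠ 0 := ne_of_gt h1v
    refine ⟨-2*Real.log (1-v)*(1-2*v)/(v*(1-v)), ?_, ?_⟩
    · -- tsum derivative
      have hD : HasDerivAt (fun t => ∑' n : ℕ, cb (n+1) * (t*(1-t))^(n+1) / ((n:ℝ)+1)^2)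
          (∑' n : ℕ, cb (n+1) * ((v*(1-v))^n * (1-2*v)) / ((n:ℝ)+1)) v := by
        have hzb' : 0 ≤ b'*(1-b') := by nlinarith
        have hzb4 : 4*(b'*(1-b')) < 1 := by nlinarith
        apply hasDerivAt_tsum_of_isPreconnected
          (((summable_geometric_of_lt_one (by positivity) hzb4).mul_left
            (4:ℝ)) : Summable fun n : ℕ => 4 * (4*(b'*(1-b')))^n)
          (isOpen_Ioo (a := 0) (b := b')) (convex_Ioo _ _).isPreconnected
          (g' := fun (n : ℕ) (w : ℝ) => cb (n+1) * ((w*(1-w))^n * (1-2*w)) / ((n:ℝ)+1))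
          (y₀ := u)
        · intro n y _
          exact F2_term_hasDerivAt n y
        · intro n y hy
          have hy0 : 0 < y := hy.1
          have hyb : y < b' := hy.2
          have hzy0 : 0 ≤ y*(1-y) := by nlinarith
          have hmono : y*(1-y) ≤ b'*(1-b') := z_mono (le_of_lt hy0) (le_of_lt hyb)
            (le_of_lt hb'h)
          have h2y : |1-2*y| ≤ 1 := by
            rw [abs_le]; constructor <;> nlinarith
          have hn1 : (1:ℝ) ≤ (n:ℝ)+1 := by linarith [Nat.cast_nonneg (α := ℝ) n]
          rw [Real.norm_eq_abs, abs_div, abs_mul, abs_of_pos (cb_pos (n+1)), abs_mul,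
            abs_pow, abs_of_nonneg hzy0, abs_of_nonneg (by linarith : (0:ℝ) ≤ (n:ℝ)+1)]
          calc cb (n+1) * ((y*(1-y))^n * |1-2*y|) / ((n:ℝ)+1)
              ≤ cb (n+1) * ((y*(1-y))^n * |1-2*y|) / 1 := by
                apply div_le_div_of_nonneg_left ?_ one_pos hn1
                exact mul_nonneg (le_of_lt (cb_pos (n+1)))
                  (mul_nonneg (by positivity) (abs_nonneg _))
            _ = cb (n+1) * ((y*(1-y))^n * |1-2*y|) := div_one _
            _ ≤ 4^(n+1) * ((b'*(1-b'))^n * 1) := by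
                apply mul_le_mul (cb_le (n+1)) ?_ (by positivity) (by positivity)
                exact mul_le_mul (pow_le_pow_left₀ hzy0 hmono _) h2y (abs_nonneg _)
                  (by positivity)
            _ = 4 * (4*(b'*(1-b')))^n := by
                rw [mul_pow (4:ℝ) (b'*(1-b')) n, pow_succ]; ring
        · exact ⟨h0', hub'⟩
        · exact summable_F2 (le_of_lt h0') h
        · exact ⟨hv0, lt_trans hvu hub'⟩
      refine hD.congr_deriv ?_
      have hsplit : ∑' n : ℕ, cb (n+1) * ((v*(1-v))^n * (1-2*v)) / ((n:ℝ)+1)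
          = ((1-2*v)/(v*(1-v))) * ∑' n : ℕ, cb (n+1) * (v*(1-v))^(n+1) / ((n:ℝ)+1) := by
        rw [← tsum_mul_left]
        apply tsum_congr
        intro n
        rw [pow_succ]
        have hne : ((n:ℝ)+1) ≠ 0 := by positivity
        have hzne : v*(1-v) ≠ 0 := mul_ne_zero hvne h1vne
        field_simp
      rw [hsplit, F1_eq (le_of_lt hv0) hv12]
      ring
    · -- RHS derivative
      have hli2 := li2_hasDerivAt hv0 (by linarith : v < 1)
      have hinner : HasDerivAt (fun t : ℝ => 1 - t) (-1) v := by
        have := (hasDerivAt_const v (1:ℝ)).sub (hasDerivAt_id' v)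
        rwa [zero_sub] at this
      have hlog := (Real.hasDerivAt_log (ne_of_gt h1v)).comp v hinner
      have hlogsq := hlog.pow 2
      have hcomb := (hli2.const_mul (2:ℝ)).sub hlogsq
      refine hcomb.congr_deriv ?_
      simp only [pow_one, Nat.cast_ofNat, Function.comp_apply]
      have hzne : v*(1-v) ≠ 0 := mul_ne_zero hvne h1vne
      field_simp
      ring
  · norm_num [li2_zero]


lemma wallis_prod (n : ℕ) :
    ∏ i ∈ Finset.range n, (2*(i:ℝ)+1)/(2*(i:ℝ)+2) = cb n / 4^n := by
  induction n with
  | zero => simp [cb_zero]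
  | succ k ih =>
    rw [Finset.prod_range_succ, ih]
    have hrec := cb_rec k
    have h1 : (2*(k:ℝ)+2) ≠ 0 := by positivity
    have h2 : (4:ℝ)^k ≠ 0 := by positivity
    field_simp
    linear_combination (-2*(4:ℝ)^k) * hrec

lemma integral_sin_even' (n : ℕ) :
    ∫ θ in (0:ℝ)..π, Real.sin θ^(2*n) = π * (cb n / 4^n) := by
  rw [integral_sin_pow_even, wallis_prod]

lemma integral_li2 (z : ℝ) (h0 : 0 ≤ z) (h1 : z < 1/4) :
    ∫ θ in (0:ℝ)..π, li2 (4*z*(Real.sin θ)^2)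
      = π * ∑' n : ℕ, cb (n+1) * z^(n+1) / ((n:ℝ)+1)^2 := by
  have hpi : (0:ℝ) ≤ π := Real.pi_pos.le
  have hF : ∀ θ : ℝ, li2 (4*z*(Real.sin θ)^2)
      = ∑' n : ℕ, (4*z*(Real.sin θ)^2)^(n+1)/((n:ℝ)+1)^2 := fun θ => rfl
  simp only [hF]
  rw [intervalIntegral.integral_of_le hpi]
  have hcont : ∀ n : ℕ, Continuous (fun θ : ℝ => (4*z*(Real.sin θ)^2)^(n+1)/((n:ℝ)+1)^2) := by
    intro n; fun_prop
  have hint : ∀ n : ℕ, MeasureTheory.Integrable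
      (fun θ : ℝ => (4*z*(Real.sin θ)^2)^(n+1)/((n:ℝ)+1)^2)
      (MeasureTheory.volume.restrict (Set.Ioc 0 π)) := by
    intro n
    exact ((hcont n).integrableOn_Ioc)
  have hbound : ∀ (n : ℕ) (θ : ℝ), ‖(4*z*(Real.sin θ)^2)^(n+1)/((n:ℝ)+1)^2‖ ≤ (4*z)^(n+1) := by
    intro n θ
    have hsin : (Real.sin θ)^2 ≤ 1 := by
      nlinarith [Real.neg_one_le_sin θ, Real.sin_le_one θ]
    have hsin0 : 0 ≤ (Real.sin θ)^2 := sq_nonneg _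
    have hx0 : 0 ≤ 4*z*(Real.sin θ)^2 := by positivity
    have hn1 : (1:ℝ) ≤ ((n:ℝ)+1)^2 := by nlinarith [Nat.cast_nonneg (α := ℝ) n]
    rw [Real.norm_eq_abs, abs_div, abs_pow, abs_of_nonneg hx0,
      abs_of_nonneg (by positivity : (0:ℝ) ≤ ((n:ℝ)+1)^2)]
    calc (4*z*(Real.sin θ)^2)^(n+1)/((n:ℝ)+1)^2 ≤ (4*z*(Real.sin θ)^2)^(n+1)/1 :=
          div_le_div_of_nonneg_left (by positivity) one_pos hn1
      _ = (4*z*(Real.sin θ)^2)^(n+1) := div_one _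
      _ ≤ (4*z)^(n+1) := by
          apply pow_le_pow_left₀ hx0
          nlinarith
  have hsum : Summable (fun n : ℕ =>
      ∫ θ in Set.Ioc (0:ℝ) π, ‖(4*z*(Real.sin θ)^2)^(n+1)/((n:ℝ)+1)^2‖) := by
    apply Summable.of_nonneg_of_le
      (fun n => MeasureTheory.integral_nonneg (fun θ => norm_nonneg _))
      (fun n => ?_)
      (((summable_geometric_of_lt_one (by positivity) (by linarith : 4*z < 1)).mul_left
        ((4*z)*π)) : Summable fun n : ℕ => (4*z)*π * (4*z)^n)
    calc ∫ θ in Set.Ioc (0:ℝ) π, ‖(4*z*(Real.sin θ)^2)^(n+1)/((n:ℝ)+1)^2‖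
        ≤ ∫ _θ in Set.Ioc (0:ℝ) π, (4*z)^(n+1) := by
          apply MeasureTheory.setIntegral_mono_on (hint n).norm
            (MeasureTheory.integrableOn_const measure_Ioc_lt_top.ne)
            measurableSet_Ioc
          intro θ _
          exact hbound n θ
      _ = π * (4*z)^(n+1) := by
          rw [MeasureTheory.setIntegral_const]
          simp [Real.volume_Ioc, ENNReal.toReal_ofReal hpi, hpi]
      _ = (4*z)*π * (4*z)^n := by rw [pow_succ]; ring
  rw [← MeasureTheory.integral_tsum_of_summable_integral_norm hint hsum]
  have hterm : ∀ n : ℕ, (∫ θ in Set.Ioc (0:ℝ) π, (4*z*(Real.sin θ)^2)^(n+1)/((n:ℝ)+1)^2)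
      = π * (cb (n+1) * z^(n+1) / ((n:ℝ)+1)^2) := by
    intro n
    rw [← intervalIntegral.integral_of_le hpi]
    have hrw : ∀ θ : ℝ, (4*z*(Real.sin θ)^2)^(n+1)/((n:ℝ)+1)^2
        = ((4*z)^(n+1)/((n:ℝ)+1)^2) * Real.sin θ^(2*(n+1)) := by
      intro θ
      rw [mul_pow, pow_mul]
      ring
    simp only [hrw]
    rw [intervalIntegral.integral_const_mul, integral_sin_even' (n+1)]
    have hne : ((n:ℝ)+1) ≠ 0 := by positivity
    have h4 : (4:ℝ)^(n+1) ≠ 0 := by positivity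
    rw [mul_pow]
    field_simp
  simp only [hterm]
  rw [tsum_mul_left]

end DilogAux

theorem dilog_integral_closed_form (z : ℝ) (h0 : 0 ≤ z) (h1 : z < 1/4) :
    (2/π) * ∫ θ in (0:ℝ)..π, li2 (4 * z * (Real.sin θ)^2)
      = 4 * li2 ((1 - Real.sqrt (1 - 4*z)) / 2)
        - 2 * (Real.log ((1 + Real.sqrt (1 - 4*z)) / 2))^2 := by
  have h14 : (0:ℝ) < 1 - 4*z := by linarith
  set s : ℝ := Real.sqrt (1 - 4*z) with hs
  have hs0 : 0 < s := Real.sqrt_pos.mpr h14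
  have hs1 : s ≤ 1 := by
    rw [hs]
    have h := Real.sqrt_le_sqrt (show 1 - 4*z ≤ 1 by linarith)
    simpa using h
  have hssq : s^2 = 1 - 4*z := Real.sq_sqrt (le_of_lt h14)
  set u : ℝ := (1 - s)/2 with hu
  have hu0 : 0 ≤ u := by rw [hu]; linarith
  have hu2 : u < 1/2 := by rw [hu]; linarith
  have huz : u*(1-u) = z := by
    rw [hu]
    nlinarith [hssq]
  have h1u : (1 + s)/2 = 1 - u := by rw [hu]; ring
  rw [DilogAux.integral_li2 z h0 h1, h1u, ← huz]
  rw [DilogAux.F2_eq hu0 hu2]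
  have hpi : π ≠ 0 := Real.pi_ne_zero
  field_simp
  ring
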